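/- Every triangulation of a convex d-polytope with n vertices (using only polytope vertices) has at least n - d full-dimensional simplices. -/

import Mathlib

open Set MeasureTheory


lemma aux_span_ne_top {d : ℕ} (s : Finset (Fin d → ℝ)) (h : s.card ≤ d) :
    affineSpan ℝ (s : Set (Fin d → ℝ)) ≠ ⊤ := by
  intro htop
  rcases s.eq_empty_or_nonempty with rfl | hne
  · rw [Finset.coe_empty, AffineSubspace.span_empty] at htop
    have : (0 : Fin d → ℝ) ∈ (⊥ : AffineSubspace ℝ (Fin d → ℝ)) := htop ▸ AffineSubspace.mem_top ℝ _ _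
    exact AffineSubspace.notMem_bot ℝ _ _ this
  · have hcard : s.card = (s.card - 1) + 1 :=
      (Nat.succ_pred_eq_of_pos (Finset.card_pos.2 hne)).symm
    have hle := finrank_vectorSpan_image_finset_le ℝ (id : (Fin d → ℝ) → (Fin d → ℝ)) s hcard
    rw [Finset.image_id] at hle
    have hdir : vectorSpan ℝ (s : Set (Fin d → ℝ)) = ⊤ := by
      rw [← direction_affineSpan, htop, AffineSubspace.direction_top]
    rw [hdir, finrank_top, Module.finrank_fin_fun] at hle
    omega

lemma aux_seg_avoid {d : ℕ} {x y z : Fin d → ℝ} {s : Finset (Fin d → ℝ)}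
    (hx : x ∉ affineSpan ℝ (s : Set (Fin d → ℝ)))
    (hy : y ∉ affineSpan ℝ ((insert x s : Finset (Fin d → ℝ)) : Set (Fin d → ℝ)))
    {l : ℝ} (hz : z = x + l • (y - x))
    (hzs : z ∈ convexHull ℝ (s : Set (Fin d → ℝ))) : False := by
  classical
  have hzspan : z ∈ affineSpan ℝ (s : Set (Fin d → ℝ)) :=
    convexHull_subset_affineSpan _ hzs
  rcases eq_or_ne l 0 with rfl | hl
  · rw [zero_smul, add_zero] at hz
    exact hx (hz ▸ hzspan)
  · set F := affineSpan ℝ ((insert x s : Finset (Fin d → ℝ)) : Set (Fin d → ℝ)) with hF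
    have hxF : x ∈ F := subset_affineSpan ℝ _ (by simp)
    have hzF : z ∈ F := by
      refine affineSpan_mono ℝ ?_ hzspan
      simp [Set.subset_insert]
    have hy' : y = AffineMap.lineMap x z l⁻¹ := by
      rw [AffineMap.lineMap_apply]
      simp only [vsub_eq_sub, vadd_eq_add, hz]
      rw [add_sub_cancel_left, smul_smul, inv_mul_cancel₀ hl, one_smul]
      abel
    have : y ∈ F := by
      rw [hy']
      have hmem : AffineMap.lineMap x z l⁻¹ ∈ affineSpan ℝ ({x, z} : Set (Fin d → ℝ)) :=
        AffineMap.lineMap_mem_affineSpan_pair _ _ _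
      refine (affineSpan_le.2 ?_) hmem
      intro w hw
      rcases hw with rfl | hw
      · exact hxF
      · simp only [Set.mem_singleton_iff] at hw; exact hw ▸ hzF
    exact hy this


lemma aux_cross {X : Type*} [DecidableEq X] {adj : X → X → Prop} {S : Finset X} {a b : X}
    (h : Relation.ReflTransGen adj a b) (ha : a ∈ S) (hb : b ∉ S) :
    ∃ u ∈ S, ∃ w, w ∉ S ∧ adj u w := by
  induction h with
  | refl => exact absurd ha hb
  | @tail c b' h' step ih =>
    by_cases hc : c ∈ S
    · exact ⟨c, hc, b', hb, step⟩
    · exact ih hc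

lemma aux_count {d : ℕ} {X : Type*} [DecidableEq X] (T : Finset (Finset X))
    (hcard : ∀ s ∈ T, s.card = d + 1)
    (hconn : ∀ s ∈ T, ∀ t ∈ T,
      Relation.ReflTransGen (fun u w => w ∈ T ∧ u ≠ w ∧ d ≤ (u ∩ w).card) s t)
    (hne : T.Nonempty) : (T.biUnion id).card ≤ T.card + d := by
  classical
  obtain ⟨s₀, hs₀⟩ := hne
  suffices H : ∀ k : ℕ, ∀ S : Finset (Finset X), S ⊆ T → s₀ ∈ S →
      (S.biUnion id).card ≤ S.card + d → T.card - S.card ≤ k →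
      (T.biUnion id).card ≤ T.card + d by
    refine H T.card {s₀} (Finset.singleton_subset_iff.2 hs₀) (Finset.mem_singleton_self _) ?_ ?_
    · simp only [Finset.singleton_biUnion, id, Finset.card_singleton, hcard s₀ hs₀]
      omega
    · omega
  intro k
  induction k with
  | zero =>
    intro S hST hs₀S hcount hk
    have : S = T := Finset.eq_of_subset_of_card_le hST (by omega)
    subst this
    exact hcount
  | succ k ih =>
    intro S hST hs₀S hcount hk
    by_cases hTS : T ⊆ S
    · have : S = T := Finset.Subset.antisymm hST hTS
      subst this; exact hcount
    · obtain ⟨t, htT, htS⟩ := Finset.not_subset.1 hTS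
      obtain ⟨u, huS, w, hwS, hwT, hne', hd⟩ := aux_cross (hconn s₀ hs₀ t htT) hs₀S htS
      have huT : u ∈ T := hST huS
      have hwB : w \ S.biUnion id ⊆ w \ u := by
        refine Finset.sdiff_subset_sdiff (Finset.Subset.refl _) ?_
        intro a ha
        exact Finset.mem_biUnion.2 ⟨u, huS, ha⟩
      have hw1 : (w \ u).card ≤ 1 := by
        have h1 := Finset.card_sdiff_add_card_inter w u
        have h2 : (w ∩ u).card = (u ∩ w).card := by rw [Finset.inter_comm]
        have h3 := hcard w hwT
        omega
      have hins : ((insert w S).biUnion id).card ≤ (insert w S).card + d := by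
        rw [Finset.biUnion_insert]
        have h2 : (id w ∪ S.biUnion id).card ≤ (w \ S.biUnion id).card + (S.biUnion id).card := by
          rw [Finset.card_sdiff_add_card]
          exact Finset.card_le_card (by intro a ha; simpa using ha)
        have h3 : (w \ S.biUnion id).card ≤ 1 := le_trans (Finset.card_le_card hwB) hw1
        rw [Finset.card_insert_of_notMem hwS]
        omega
      refine ih (insert w S) (Finset.insert_subset hwT hST) (Finset.mem_insert_of_mem hs₀S)
        hins ?_
      rw [Finset.card_insert_of_notMem hwS]
      have := Finset.card_le_card (Finset.insert_subset hwT hST)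
      rw [Finset.card_insert_of_notMem hwS] at this
      omega

set_option maxHeartbeats 2000000 in
lemma aux_conn {d : ℕ} (V : Finset (Fin d → ℝ)) (T : Finset (Finset (Fin d → ℝ)))
    (hsub : ∀ s ∈ T, s ⊆ V)
    (hspan : ∀ s ∈ T, affineSpan ℝ (s : Set (Fin d → ℝ)) = ⊤)
    (hcover : ∀ p ∈ convexHull ℝ (V : Set (Fin d → ℝ)),
      ∃ u ∈ T, p ∈ convexHull ℝ (u : Set (Fin d → ℝ)))
    (hmeet : ∀ s ∈ T, ∀ t ∈ T,
      convexHull ℝ (s : Set (Fin d → ℝ)) ∩ convexHull ℝ (t : Set (Fin d → ℝ)) =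
        convexHull ℝ ((s ∩ t : Finset (Fin d → ℝ)) : Set (Fin d → ℝ)))
    {s t : Finset (Fin d → ℝ)} (hs : s ∈ T) (ht : t ∈ T) :
    Relation.ReflTransGen (fun u w => w ∈ T ∧ u ≠ w ∧ d ≤ (u ∩ w).card) s t := by
  classical
  set adj : Finset (Fin d → ℝ) → Finset (Fin d → ℝ) → Prop :=
    fun u w => w ∈ T ∧ u ≠ w ∧ d ≤ (u ∩ w).card with hadj
  -- interiors of simplices are nonempty
  have hint : ∀ u ∈ T, (interior (convexHull ℝ (u : Set (Fin d → ℝ)))).Nonempty := by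
    intro u hu
    rw [(convex_convexHull ℝ _).interior_nonempty_iff_affineSpan_eq_top, affineSpan_convexHull]
    exact hspan u hu
  -- the bad pairs
  set Q : Finset (Finset (Fin d → ℝ) × Finset (Fin d → ℝ)) :=
    (T ×ˢ T).filter (fun p => p.1 ≠ p.2 ∧ (p.1 ∩ p.2).card < d) with hQ
  have hQmem : ∀ p ∈ Q, p.1 ∈ T ∧ p.2 ∈ T ∧ p.1 ≠ p.2 ∧ (p.1 ∩ p.2).card < d := by
    intro p hp
    simp only [hQ, Finset.mem_filter, Finset.mem_product] at hp
    tauto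
  have hQof : ∀ u ∈ T, ∀ w ∈ T, u ≠ w → (u ∩ w).card < d → (u, w) ∈ Q := by
    intro u hu w hw hne hlt
    simp only [hQ, Finset.mem_filter, Finset.mem_product]
    exact ⟨⟨hu, hw⟩, hne, hlt⟩
  -- choose a generic point x in the interior of conv s
  have hnull1 : volume (⋃ p ∈ (Q : Set (Finset (Fin d → ℝ) × Finset (Fin d → ℝ))),
      (affineSpan ℝ ((p.1 ∩ p.2 : Finset (Fin d → ℝ)) : Set (Fin d → ℝ)) : Set (Fin d → ℝ))) = 0 := by
    refine (measure_biUnion_null_iff Q.countable_toSet).2 ?_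
    intro p hp
    exact Measure.addHaar_affineSubspace _ _
      (aux_span_ne_top _ (le_of_lt (hQmem p hp).2.2.2))
  obtain ⟨x, hxint, hxbad⟩ :
      (interior (convexHull ℝ (s : Set (Fin d → ℝ))) \
        ⋃ p ∈ (Q : Set (Finset (Fin d → ℝ) × Finset (Fin d → ℝ))),
          (affineSpan ℝ ((p.1 ∩ p.2 : Finset (Fin d → ℝ)) : Set (Fin d → ℝ)) : Set (Fin d → ℝ))).Nonempty := by
    apply nonempty_of_measure_ne_zero (μ := volume)
    rw [measure_diff_null hnull1]
    exact (isOpen_interior.measure_pos volume (hint s hs)).ne'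
  have hxgood : ∀ p ∈ Q, x ∉ affineSpan ℝ ((p.1 ∩ p.2 : Finset (Fin d → ℝ)) : Set (Fin d → ℝ)) := by
    intro p hp hmem
    exact hxbad (Set.mem_biUnion (Finset.mem_coe.2 hp) hmem)
  -- choose a generic point y in the interior of conv t
  have hnull2 : volume (⋃ p ∈ (Q : Set (Finset (Fin d → ℝ) × Finset (Fin d → ℝ))),
      (affineSpan ℝ ((insert x (p.1 ∩ p.2) : Finset (Fin d → ℝ)) : Set (Fin d → ℝ)) : Set (Fin d → ℝ))) = 0 := by
    refine (measure_biUnion_null_iff Q.countable_toSet).2 ?_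
    intro p hp
    refine Measure.addHaar_affineSubspace _ _ (aux_span_ne_top _ ?_)
    have h1 := Finset.card_insert_le x (p.1 ∩ p.2)
    have h2 := (hQmem p hp).2.2.2
    omega
  obtain ⟨y, hyint, hybad⟩ :
      (interior (convexHull ℝ (t : Set (Fin d → ℝ))) \
        ⋃ p ∈ (Q : Set (Finset (Fin d → ℝ) × Finset (Fin d → ℝ))),
          (affineSpan ℝ ((insert x (p.1 ∩ p.2) : Finset (Fin d → ℝ)) : Set (Fin d → ℝ)) : Set (Fin d → ℝ))).Nonempty := by
    apply nonempty_of_measure_ne_zero (μ := volume)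
    rw [measure_diff_null hnull2]
    exact (isOpen_interior.measure_pos volume (hint t ht)).ne'
  have hygood : ∀ p ∈ Q, y ∉ affineSpan ℝ ((insert x (p.1 ∩ p.2) : Finset (Fin d → ℝ)) : Set (Fin d → ℝ)) := by
    intro p hp hmem
    exact hybad (Set.mem_biUnion (Finset.mem_coe.2 hp) hmem)
  -- the segment and its genericity
  set f : ℝ → (Fin d → ℝ) := fun l => x + l • (y - x) with hfdef
  have hf : Continuous f := by
    apply continuous_const.add
    exact continuous_id.smul continuous_const
  have havoid : ∀ (l : ℝ), ∀ p ∈ Q,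
      f l ∉ convexHull ℝ ((p.1 ∩ p.2 : Finset (Fin d → ℝ)) : Set (Fin d → ℝ)) := by
    intro l p hp hcon
    exact aux_seg_avoid (hxgood p hp) (hygood p hp) rfl hcon
  have hxV : x ∈ convexHull ℝ (V : Set (Fin d → ℝ)) :=
    convexHull_mono (Finset.coe_subset.2 (hsub s hs)) (interior_subset hxint)
  have hyV : y ∈ convexHull ℝ (V : Set (Fin d → ℝ)) :=
    convexHull_mono (Finset.coe_subset.2 (hsub t ht)) (interior_subset hyint)
  have hseg : ∀ l ∈ Icc (0:ℝ) 1, f l ∈ convexHull ℝ (V : Set (Fin d → ℝ)) := by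
    intro l hl
    have heq : f l = (1 - l) • x + l • y := by
      simp only [hfdef]
      module
    rw [heq]
    exact (convex_convexHull ℝ _) hxV hyV (by linarith [hl.2]) hl.1 (by ring)
  -- the reachable-time set
  set A : Set ℝ := {l | l ∈ Icc (0:ℝ) 1 ∧ ∃ u ∈ T,
      Relation.ReflTransGen adj s u ∧ f l ∈ convexHull ℝ (u : Set (Fin d → ℝ))} with hA
  have h0A : (0:ℝ) ∈ A := by
    refine ⟨⟨le_refl _, zero_le_one⟩, s, hs, Relation.ReflTransGen.refl, ?_⟩
    have : f 0 = x := by simp [hfdef]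
    rw [this]
    exact interior_subset hxint
  have hAne : A.Nonempty := ⟨0, h0A⟩
  have hAbdd : BddAbove A := ⟨1, fun l hl => hl.1.2⟩
  have hAclosed : IsClosed A := by
    have hAeq : A = Icc (0:ℝ) 1 ∩ ⋃ u ∈ {u : Finset (Fin d → ℝ) | u ∈ T ∧
        Relation.ReflTransGen adj s u}, f ⁻¹' (convexHull ℝ (u : Set (Fin d → ℝ))) := by
      ext l
      simp only [hA, Set.mem_setOf_eq, Set.mem_inter_iff, Set.mem_iUnion, Set.mem_preimage,
        exists_prop]
      tauto
    rw [hAeq]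
    refine isClosed_Icc.inter ?_
    refine Set.Finite.isClosed_biUnion (T.finite_toSet.subset (fun u hu => hu.1)) ?_
    intro u hu
    exact ((u.finite_toSet.isCompact_convexHull ℝ).isClosed).preimage hf
  set μ : ℝ := sSup A with hμ
  have hμA : μ ∈ A := hAclosed.csSup_mem hAne hAbdd
  have hμ0 : (0:ℝ) ≤ μ := le_csSup hAbdd h0A
  have hμ1 : μ ≤ 1 := csSup_le hAne (fun l hl => hl.1.2)
  have hμeq : μ = 1 := by
    by_contra hne1
    have hμlt : μ < 1 := lt_of_le_of_ne hμ1 hne1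
    have hμcl : μ ∈ closure (⋃ w ∈ (T : Set (Finset (Fin d → ℝ))),
        (Ioc μ 1 ∩ f ⁻¹' (convexHull ℝ (w : Set (Fin d → ℝ))))) := by
      have h1 : Ioc μ 1 ⊆ ⋃ w ∈ (T : Set (Finset (Fin d → ℝ))),
          (Ioc μ 1 ∩ f ⁻¹' (convexHull ℝ (w : Set (Fin d → ℝ)))) := by
        intro l hl
        obtain ⟨w, hw, hfw⟩ := hcover (f l)
          (hseg l ⟨le_trans hμ0 (le_of_lt hl.1), hl.2⟩)
        exact Set.mem_biUnion (Finset.mem_coe.2 hw) ⟨hl, hfw⟩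
      have h2 : μ ∈ closure (Ioc μ 1) := by
        rw [closure_Ioc (ne_of_lt hμlt)]
        exact ⟨le_refl _, hμ1⟩
      exact closure_mono h1 h2
    rw [T.finite_toSet.closure_biUnion] at hμcl
    obtain ⟨w, hwT', hμw⟩ := Set.mem_iUnion₂.1 hμcl
    have hwT : w ∈ T := Finset.mem_coe.1 hwT'
    have hfμw : f μ ∈ convexHull ℝ (w : Set (Fin d → ℝ)) := by
      have hcl : closure (Ioc μ 1 ∩ f ⁻¹' (convexHull ℝ (w : Set (Fin d → ℝ)))) ⊆
          f ⁻¹' (convexHull ℝ (w : Set (Fin d → ℝ))) :=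
        closure_minimal inter_subset_right
          (((w.finite_toSet.isCompact_convexHull ℝ).isClosed).preimage hf)
      exact hcl hμw
    have hSne : (Ioc μ 1 ∩ f ⁻¹' (convexHull ℝ (w : Set (Fin d → ℝ)))).Nonempty := by
      rw [Set.nonempty_iff_ne_empty]
      intro hemp
      rw [hemp, closure_empty] at hμw
      exact hμw
    obtain ⟨l', hl'Ioc, hl'w⟩ := hSne
    obtain ⟨hμIcc, u, huT, hreach, hfμu⟩ := hμA
    have hfuw : f μ ∈ convexHull ℝ ((u ∩ w : Finset (Fin d → ℝ)) : Set (Fin d → ℝ)) := by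
      rw [← hmeet u huT w hwT]
      exact ⟨hfμu, hfμw⟩
    have hwreach : Relation.ReflTransGen adj s w := by
      rcases eq_or_ne u w with rfl | hne'
      · exact hreach
      · have hcge : d ≤ (u ∩ w).card := by
          by_contra hlt
          exact havoid μ (u, w) (hQof u huT w hwT hne' (lt_of_not_ge hlt)) hfuw
        exact hreach.tail ⟨hwT, hne', hcge⟩
    have hl'A : l' ∈ A :=
      ⟨⟨le_trans hμ0 (le_of_lt hl'Ioc.1), hl'Ioc.2⟩, w, hwT, hwreach, hl'w⟩
    have := le_csSup hAbdd hl'A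
    have := hl'Ioc.1
    linarith
  -- conclusion
  obtain ⟨hμIcc, u, huT, hreach, hfμu⟩ := hμA
  have hy1 : f μ = y := by
    rw [hμeq]
    simp [hfdef]
  rw [hy1] at hfμu
  rcases eq_or_ne u t with rfl | hne' 
  · exact hreach
  · have hyt : y ∈ convexHull ℝ (t : Set (Fin d → ℝ)) := interior_subset hyint
    have hyut : y ∈ convexHull ℝ ((u ∩ t : Finset (Fin d → ℝ)) : Set (Fin d → ℝ)) := by
      rw [← hmeet u huT t ht]
      exact ⟨hfμu, hyt⟩
    have hcge : d ≤ (u ∩ t).card := by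
      by_contra hlt
      have hpQ : (u, t) ∈ Q := hQof u huT t ht hne' (lt_of_not_ge hlt)
      have h1 : y ∈ affineSpan ℝ ((u ∩ t : Finset (Fin d → ℝ)) : Set (Fin d → ℝ)) :=
        convexHull_subset_affineSpan _ hyut
      have h2 : y ∈ affineSpan ℝ ((insert x (u ∩ t) : Finset (Fin d → ℝ)) : Set (Fin d → ℝ)) := by
        refine affineSpan_mono ℝ ?_ h1
        rw [Finset.coe_insert]
        exact Set.subset_insert _ _
      exact hygood (u, t) hpQ h2
    exact hreach.tail ⟨ht, hne', hcge⟩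

/-- Every triangulation of a convex `d`-polytope with `n` vertices (using only
the vertices of the polytope) has at least `n - d` full-dimensional simplices. -/
theorem stmt16 (d : ℕ) (V : Finset (Fin d → ℝ))
    (P : Set (Fin d → ℝ)) (hP : P = convexHull ℝ (V : Set (Fin d → ℝ)))
    (hvert : (V : Set (Fin d → ℝ)) = Set.extremePoints ℝ P)
    (hdim : affineSpan ℝ (V : Set (Fin d → ℝ)) = ⊤)
    (T : Finset (Finset (Fin d → ℝ)))
    (hsub : ∀ s ∈ T, s ⊆ V)
    (hcard : ∀ s ∈ T, s.card = d + 1)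
    (hind : ∀ s ∈ T, AffineIndependent ℝ (fun x : (s : Set (Fin d → ℝ)) => (x : Fin d → ℝ)))
    (hcover : ⋃ s ∈ T, convexHull ℝ (s : Set (Fin d → ℝ)) = P)
    (hmeet : ∀ s ∈ T, ∀ t ∈ T,
      convexHull ℝ (s : Set (Fin d → ℝ)) ∩ convexHull ℝ (t : Set (Fin d → ℝ)) =
        convexHull ℝ ((s ∩ t : Finset (Fin d → ℝ)) : Set (Fin d → ℝ))) :
    V.card - d ≤ T.card := by
  classical
  -- each simplex affinely spans the whole space
  have hspan : ∀ s ∈ T, affineSpan ℝ (s : Set (Fin d → ℝ)) = ⊤ := by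
    intro s hs
    have h1 := (hind s hs).affineSpan_eq_top_iff_card_eq_finrank_add_one
    rw [Subtype.range_coe] at h1
    apply h1.2
    rw [Module.finrank_fin_fun]
    simpa using hcard s hs
  -- every vertex of V lies in some simplex
  have hVmem : ∀ v ∈ V, ∃ u ∈ T, v ∈ u := by
    intro v hv
    have hvext : v ∈ Set.extremePoints ℝ P := by
      rw [← hvert]; exact Finset.mem_coe.2 hv
    have hvP : v ∈ P := hvext.1
    rw [← hcover] at hvP
    obtain ⟨u, huT, hvu⟩ := Set.mem_iUnion₂.1 hvP
    refine ⟨u, huT, ?_⟩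
    have hsubP : convexHull ℝ (u : Set (Fin d → ℝ)) ⊆ P := by
      rw [hP]
      exact convexHull_mono (Finset.coe_subset.2 (hsub u huT))
    have hext : v ∈ Set.extremePoints ℝ (convexHull ℝ (u : Set (Fin d → ℝ))) := by
      refine ⟨hvu, ?_⟩
      intro x₁ hx₁ x₂ hx₂ hseg
      exact hvext.2 (hsubP hx₁) (hsubP hx₂) hseg
    exact Finset.mem_coe.1 (extremePoints_convexHull_subset hext)
  -- T is nonempty
  have hVne : V.Nonempty := by
    rcases V.eq_empty_or_nonempty with rfl | h
    · exfalso
      exact aux_span_ne_top (d := d) ∅ (Nat.zero_le d) (by simpa using hdim)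
    · exact h
  obtain ⟨v₀, hv₀⟩ := hVne
  obtain ⟨u₀, hu₀T, _⟩ := hVmem v₀ hv₀
  have hTne : T.Nonempty := ⟨u₀, hu₀T⟩
  -- connectivity
  have hconn : ∀ s ∈ T, ∀ t ∈ T,
      Relation.ReflTransGen (fun u w => w ∈ T ∧ u ≠ w ∧ d ≤ (u ∩ w).card) s t := by
    intro s hs t ht
    refine aux_conn V T hsub hspan ?_ hmeet hs ht
    intro p hp
    rw [← hP, ← hcover] at hp
    obtain ⟨u, huT, hpu⟩ := Set.mem_iUnion₂.1 hp
    exact ⟨u, huT, hpu⟩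
  -- counting
  have hcount := aux_count T hcard hconn hTne
  have hVsub : V ⊆ T.biUnion id := by
    intro v hv
    obtain ⟨u, huT, hvu⟩ := hVmem v hv
    exact Finset.mem_biUnion.2 ⟨u, huT, hvu⟩
  have := Finset.card_le_card hVsub
  omega
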